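/- Let P be a Borel probability measure on ℝ^d such that for every x ∈ supp(P), liminf_{r→0} P(B(x,r))/r^d > 0. Let K : ℝ^d → ℝ be a nonnegative kernel with K(0) > 0 that is continuous at 0, let {h_n} be positive bandwidths with h_n → 0, and let {c_n} be nonnegative real numbers with c_n → 0. Then for every x ∈ supp(P) there exists N such that p_{h_n}(x) ≥ 2c_n for all n ≥ N; equivalently, the sets supp(P) \ p_{h_n}^{-1}([2c_n, ∞)) decrease to the empty set pointwise as n → ∞. -/

import Mathlib

open MeasureTheory Metric Filter
open scoped ENNReal

/-- The support of a measure `P`: points all of whose neighborhoods have positive mass. -/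
def msupp {d : ℕ} (P : Measure (EuclideanSpace ℝ (Fin d))) : Set (EuclideanSpace ℝ (Fin d)) :=
  {x | ∀ r > 0, 0 < P (ball x r)}

/-- The average kernel density estimator `p_h(x) = ∫ h^{-d} K((x-y)/h) dP(y)`
(for a nonnegative kernel, as a Lebesgue integral). -/
noncomputable def avgKDE {d : ℕ} (P : Measure (EuclideanSpace ℝ (Fin d)))
    (K : EuclideanSpace ℝ (Fin d) → ℝ) (h : ℝ) (x : EuclideanSpace ℝ (Fin d)) : ℝ≥0∞ :=
  ∫⁻ y, ENNReal.ofReal ((1 / h ^ d) * K (h⁻¹ • (x - y))) ∂P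

theorem stmt14 {d : ℕ} (P : Measure (EuclideanSpace ℝ (Fin d))) [IsProbabilityMeasure P]
    (hP : ∀ x ∈ msupp P,
      0 < liminf (fun r : ℝ => P (ball x r) / ENNReal.ofReal (r ^ d))
        (nhdsWithin (0 : ℝ) (Set.Ioi 0)))
    (K : EuclideanSpace ℝ (Fin d) → ℝ) (hK0 : ∀ y, 0 ≤ K y) (hKpos : 0 < K 0)
    (hKcont : ContinuousAt K 0)
    (h : ℕ → ℝ) (hhpos : ∀ n, 0 < h n) (hhlim : Tendsto h atTop (nhds 0))
    (c : ℕ → ℝ) (hc0 : ∀ n, 0 ≤ c n) (hclim : Tendsto c atTop (nhds 0)) :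
    (∀ x ∈ msupp P, ∃ N : ℕ, ∀ n ≥ N,
        ENNReal.ofReal (2 * c n) ≤ avgKDE P K (h n) x) ∧
      ∀ x, ∃ N : ℕ, ∀ n ≥ N,
        x ∉ msupp P \ {y | ENNReal.ofReal (2 * c n) ≤ avgKDE P K (h n) y} := by
  have key : ∀ x ∈ msupp P, ∃ N : ℕ, ∀ n ≥ N,
      ENNReal.ofReal (2 * c n) ≤ avgKDE P K (h n) x := by
    intro x hx
    -- δ from continuity of K at 0
    obtain ⟨δ, hδ, hKδ⟩ : ∃ δ > 0, ∀ y : EuclideanSpace ℝ (Fin d), ‖y‖ < δ → K 0 / 2 ≤ K y := by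
      rcases Metric.continuousAt_iff.1 hKcont (K 0 / 2) (by linarith) with ⟨δ, hδ, H⟩
      refine ⟨δ, hδ, fun y hy => ?_⟩
      have h1 := H (show dist y 0 < δ by simpa [dist_eq_norm] using hy)
      have h2 := abs_lt.1 (by simpa [Real.dist_eq] using h1)
      linarith [h2.1]
    set L := liminf (fun r : ℝ => P (ball x r) / ENNReal.ofReal (r ^ d))
        (nhdsWithin (0 : ℝ) (Set.Ioi 0)) with hLdef
    have hLpos : 0 < L := hP x hx
    set a : ℝ≥0∞ := min L 1 / 2 with ha
    have hapos : 0 < a := by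
      rw [ha]
      apply ENNReal.div_pos
      · simp only [ne_eq, min_eq_iff]
        rintro (⟨h1, -⟩ | ⟨h1, -⟩) <;> simp_all
      · exact ENNReal.ofNat_ne_top
    have haL : a < L := by
      rcases le_total L 1 with hL1 | hL1
      · rw [ha, min_eq_left hL1]
        exact ENNReal.half_lt_self hLpos.ne' (ne_top_of_le_ne_top ENNReal.one_ne_top hL1)
      · calc a ≤ 1 / 2 := by rw [ha]; gcongr; exact min_le_right _ _
          _ < 1 := by norm_num
          _ ≤ L := hL1
    -- eventually along the liminf filter
    have hev : ∀ᶠ r in nhdsWithin (0 : ℝ) (Set.Ioi 0),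
        a < P (ball x r) / ENNReal.ofReal (r ^ d) :=
      Filter.eventually_lt_of_lt_liminf haL
    have htend : Tendsto (fun n => δ * h n) atTop (nhdsWithin (0 : ℝ) (Set.Ioi 0)) := by
      rw [tendsto_nhdsWithin_iff]
      constructor
      · simpa using hhlim.const_mul δ
      · exact Eventually.of_forall fun n => mul_pos hδ (hhpos n)
    have hA : ∀ᶠ n in atTop,
        a < P (ball x (δ * h n)) / ENNReal.ofReal ((δ * h n) ^ d) := htend.eventually hev
    have hMpos : 0 < a * ENNReal.ofReal (K 0 / 2 * δ ^ d) := by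
      apply ENNReal.mul_pos hapos.ne'
      simp only [ne_eq, ENNReal.ofReal_eq_zero, not_le]
      positivity
    have hB : ∀ᶠ n in atTop,
        ENNReal.ofReal (2 * c n) < a * ENNReal.ofReal (K 0 / 2 * δ ^ d) := by
      have : Tendsto (fun n => ENNReal.ofReal (2 * c n)) atTop (nhds 0) := by
        have h2c : Tendsto (fun n => 2 * c n) atTop (nhds 0) := by
          simpa using hclim.const_mul 2
        simpa using (ENNReal.tendsto_ofReal h2c)
      exact this.eventually_lt_const hMpos
    rcases eventually_atTop.1 (hA.and hB) with ⟨N, hN⟩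
    refine ⟨N, fun n hn => ?_⟩
    obtain ⟨hAn, hBn⟩ := hN n hn
    set r := δ * h n with hr
    have hrpos : 0 < r := mul_pos hδ (hhpos n)
    have hball : a * ENNReal.ofReal (r ^ d) ≤ P (ball x r) := by
      have hne : ENNReal.ofReal (r ^ d) ≠ 0 := by
        simp only [ne_eq, ENNReal.ofReal_eq_zero, not_le]; positivity
      exact (ENNReal.le_div_iff_mul_le (Or.inl hne)
        (Or.inl ENNReal.ofReal_ne_top)).1 hAn.le
    have hint : ENNReal.ofReal ((1 / (h n) ^ d) * (K 0 / 2)) * P (ball x r)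
        ≤ avgKDE P K (h n) x := by
      rw [avgKDE, ← lintegral_indicator_const (measurableSet_ball)
        (ENNReal.ofReal ((1 / (h n) ^ d) * (K 0 / 2)))]
      apply lintegral_mono
      intro y
      by_cases hy : y ∈ ball x r
      · rw [Set.indicator_of_mem hy]
        apply ENNReal.ofReal_le_ofReal
        have hnorm : ‖(h n)⁻¹ • (x - y)‖ < δ := by
          rw [norm_smul, norm_inv, Real.norm_eq_abs, abs_of_pos (hhpos n)]
          rw [mem_ball, dist_comm, dist_eq_norm] at hy
          rw [inv_mul_lt_iff₀ (hhpos n)]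
          calc ‖x - y‖ < r := hy
            _ = h n * δ := by rw [hr]; ring
        have := hKδ _ hnorm
        have hpow : (0:ℝ) ≤ 1 / (h n) ^ d :=
          div_nonneg one_pos.le (pow_pos (hhpos n) d).le
        exact mul_le_mul_of_nonneg_left this hpow
      · rw [Set.indicator_of_notMem hy]; exact zero_le
    calc ENNReal.ofReal (2 * c n) ≤ a * ENNReal.ofReal (K 0 / 2 * δ ^ d) := hBn.le
      _ = ENNReal.ofReal ((1 / (h n) ^ d) * (K 0 / 2)) * (a * ENNReal.ofReal (r ^ d)) := by
          rw [← mul_assoc, mul_comm _ a, mul_assoc, ← ENNReal.ofReal_mul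
            (mul_nonneg (div_nonneg one_pos.le (pow_pos (hhpos n) d).le) (by linarith))]
          congr 2
          have hhd : (h n) ^ d ≠ 0 := (pow_pos (hhpos n) d).ne'
          rw [hr, mul_pow]
          field_simp
      _ ≤ ENNReal.ofReal ((1 / (h n) ^ d) * (K 0 / 2)) * P (ball x r) := by
          exact mul_le_mul_right hball _
      _ ≤ avgKDE P K (h n) x := hint
  refine ⟨key, fun x => ?_⟩
  by_cases hx : x ∈ msupp P
  · obtain ⟨N, hN⟩ := key x hx
    exact ⟨N, fun n hn hmem => hmem.2 (hN n hn)⟩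
  · exact ⟨0, fun n _ hmem => hx hmem.1⟩
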